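/- For every even n >= 8, the generalized Petersen graph GP(n,3) admits a perfect 2-coloring with parameter matrix [[1,2],[2,1]]; explicitly, the map T with T(a_{2i}) = T(b_{2i}) = 1 and T(a_{2i+1}) = T(b_{2i+1}) = 2 is such a coloring. -/
import Mathlib


/-- The generalized Petersen graph `GP n k`. Vertices are pairs `(s, i)` with
`s : Bool` (`false` = outer vertex `aᵢ`, `true` = inner vertex `bᵢ`) and `i : ZMod n`.
Edges: `aᵢ aᵢ₊₁`, `aᵢ bᵢ`, `bᵢ bᵢ₊ₖ`. -/
def GP (n k : ℕ) : SimpleGraph (Bool × ZMod n) :=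
  SimpleGraph.fromRel (fun v w =>
    (v.1 = false ∧ w.1 = false ∧ w.2 = v.2 + 1) ∨
    (v.1 = false ∧ w.1 = true ∧ w.2 = v.2) ∨
    (v.1 = true ∧ w.1 = true ∧ w.2 = v.2 + (k : ZMod n)))

/-- `T` is a perfect 2-coloring of `G` with parameter matrix `A`:
`T` is surjective onto the two colors (color `0` = white = "1", color `1` = black = "2"),
and every vertex of color `i` has exactly `A i j` neighbors of color `j`. -/
def IsPerfectColoring {V : Type*} (G : SimpleGraph V) (T : V → Fin 2)
    (A : Matrix (Fin 2) (Fin 2) ℕ) : Prop :=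
  Function.Surjective T ∧
  ∀ v : V, ∀ j : Fin 2, {w | G.Adj v w ∧ T w = j}.ncard = A (T v) j

section Aux

variable {n : ℕ}

lemma aux_cast_ne_zero (hn : 8 ≤ n) {k : ℕ} (hk : 0 < k) (hk8 : k < 8) :
    ((k : ZMod n)) ≠ 0 := by
  haveI : NeZero n := ⟨by omega⟩
  intro h
  rw [ZMod.natCast_eq_zero_iff] at h
  have := Nat.le_of_dvd hk h
  omega

lemma aux_val_add (hn : 8 ≤ n) (hE : 2 ∣ n) (i : ZMod n) (c : ZMod n)
    (hc : c.val % 2 = 1) : (i + c).val % 2 = (i.val + 1) % 2 := by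
  haveI : NeZero n := ⟨by omega⟩
  rw [ZMod.val_add, Nat.mod_mod_of_dvd _ hE]
  omega

lemma aux_val_one (hn : 8 ≤ n) : (1 : ZMod n).val = 1 := by
  haveI : Fact (1 < n) := ⟨by omega⟩
  exact ZMod.val_one n

lemma aux_val_three (hn : 8 ≤ n) : (3 : ZMod n).val = 3 := by
  haveI : NeZero n := ⟨by omega⟩
  have : ((3 : ℕ) : ZMod n) = (3 : ZMod n) := by push_cast; ring
  rw [← this, ZMod.val_natCast_of_lt (by omega)]

lemma aux_val_neg_one (hn : 8 ≤ n) : (-1 : ZMod n).val = n - 1 := by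
  haveI : NeZero n := ⟨by omega⟩
  have : (((n - 1 : ℕ)) : ZMod n) = (-1 : ZMod n) := by
    have h1 : (1:ℕ) ≤ n := by omega
    push_cast [Nat.cast_sub h1]
    simp
  rw [← this, ZMod.val_natCast_of_lt (by omega)]

lemma aux_val_neg_three (hn : 8 ≤ n) : (-3 : ZMod n).val = n - 3 := by
  haveI : NeZero n := ⟨by omega⟩
  have : (((n - 3 : ℕ)) : ZMod n) = (-3 : ZMod n) := by
    have h3 : (3:ℕ) ≤ n := by omega
    push_cast [Nat.cast_sub h3]
    simp
  rw [← this, ZMod.val_natCast_of_lt (by omega)]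

lemma GP_adj_false (hn : 8 ≤ n) (i : ZMod n) (w : Bool × ZMod n) :
    (GP n 3).Adj (false, i) w ↔
      w = (false, i + 1) ∨ w = (false, i - 1) ∨ w = (true, i) := by
  have h1 : (1 : ZMod n) ≠ 0 := by
    have := aux_cast_ne_zero hn (k := 1) one_pos (by omega); simpa using this
  simp only [GP]
  rw [SimpleGraph.fromRel_adj]
  constructor
  · rintro ⟨hne, (⟨-, ht, hx⟩ | ⟨-, ht, hx⟩ | ⟨h, -⟩) |
      (⟨ht, -, hx⟩ | ⟨-, h, -⟩ | ⟨-, h, -⟩)⟩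
    · exact Or.inl (Prod.ext ht hx)
    · exact Or.inr (Or.inr (Prod.ext ht hx))
    · simp at h
    · refine Or.inr (Or.inl (Prod.ext ht ?_))
      have : (i : ZMod n) = w.2 + 1 := hx
      rw [this]; ring
    · simp at h
    · simp at h
  · rintro (rfl | rfl | rfl)
    · refine ⟨fun h => h1 ?_, Or.inl (Or.inl ⟨rfl, rfl, rfl⟩)⟩
      have := congrArg Prod.snd h
      simp only at this
      linear_combination this.symm
    · refine ⟨fun h => h1 ?_, Or.inr (Or.inl ⟨rfl, rfl, by ring⟩)⟩
      have := congrArg Prod.snd h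
      simp only at this
      linear_combination this
    · exact ⟨fun h => by simp [Prod.ext_iff] at h, Or.inl (Or.inr (Or.inl ⟨rfl, rfl, rfl⟩))⟩

lemma GP_adj_true (hn : 8 ≤ n) (i : ZMod n) (w : Bool × ZMod n) :
    (GP n 3).Adj (true, i) w ↔
      w = (true, i + 3) ∨ w = (true, i - 3) ∨ w = (false, i) := by
  have h3 : (3 : ZMod n) ≠ 0 := by
    have := aux_cast_ne_zero hn (k := 3) (by omega) (by omega); simpa using this
  simp only [GP]
  rw [SimpleGraph.fromRel_adj]
  constructor
  · rintro ⟨hne, (⟨h, -⟩ | ⟨h, -⟩ | ⟨-, ht, hx⟩) |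
      (⟨-, h, -⟩ | ⟨ht, -, hx⟩ | ⟨ht, -, hx⟩)⟩
    · simp at h
    · simp at h
    · refine Or.inl (Prod.ext ht ?_)
      have : w.2 = i + ((3 : ℕ) : ZMod n) := hx
      rw [this]; push_cast; ring
    · simp at h
    · exact Or.inr (Or.inr (Prod.ext ht hx.symm))
    · refine Or.inr (Or.inl (Prod.ext ht ?_))
      have : (i : ZMod n) = w.2 + ((3 : ℕ) : ZMod n) := hx
      rw [this]; push_cast; ring
  · rintro (rfl | rfl | rfl)
    · refine ⟨fun h => h3 ?_, Or.inl (Or.inr (Or.inr ⟨rfl, rfl, by push_cast; ring⟩))⟩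
      have := congrArg Prod.snd h
      simp only at this
      linear_combination this.symm
    · refine ⟨fun h => h3 ?_, Or.inr (Or.inr (Or.inr ⟨rfl, rfl, by push_cast; ring⟩))⟩
      have := congrArg Prod.snd h
      simp only at this
      linear_combination this
    · exact ⟨fun h => by simp [Prod.ext_iff] at h, Or.inr (Or.inr (Or.inl ⟨rfl, rfl, rfl⟩))⟩

lemma ncard_cases {V : Type*} (G : SimpleGraph V) (T : V → Fin 2) (v A B C : V)
    (hadj : ∀ w, G.Adj v w ↔ w = A ∨ w = B ∨ w = C)
    (hAB : A ≠ B) {jo js : Fin 2}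
    (hTA : T A = jo) (hTB : T B = jo) (hTC : T C = js) (hne : jo ≠ js) :
    {w | G.Adj v w ∧ T w = jo}.ncard = 2 ∧ {w | G.Adj v w ∧ T w = js}.ncard = 1 := by
  constructor
  · have hset : {w | G.Adj v w ∧ T w = jo} = {A, B} := by
      ext w
      simp only [Set.mem_setOf_eq, hadj, Set.mem_insert_iff, Set.mem_singleton_iff]
      constructor
      · rintro ⟨rfl | rfl | rfl, hw⟩
        · exact Or.inl rfl
        · exact Or.inr rfl
        · rw [hTC] at hw; exact absurd hw (Ne.symm hne)
      · rintro (rfl | rfl)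
        · exact ⟨Or.inl rfl, hTA⟩
        · exact ⟨Or.inr (Or.inl rfl), hTB⟩
    rw [hset, Set.ncard_pair hAB]
  · have hset : {w | G.Adj v w ∧ T w = js} = {C} := by
      ext w
      simp only [Set.mem_setOf_eq, hadj, Set.mem_singleton_iff]
      constructor
      · rintro ⟨rfl | rfl | rfl, hw⟩
        · rw [hTA] at hw; exact absurd hw hne
        · rw [hTB] at hw; exact absurd hw hne
        · rfl
      · rintro rfl
        exact ⟨Or.inr (Or.inr rfl), hTC⟩
    rw [hset, Set.ncard_singleton]

end Aux

theorem stmt_5 (n : ℕ) (hn : 8 ≤ n) (hEven : Even n) :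
    IsPerfectColoring (GP n 3)
      (fun v => if v.2.val % 2 = 0 then 0 else 1) !![1, 2; 2, 1] := by
  haveI : NeZero n := ⟨by omega⟩
  have hE : 2 ∣ n := hEven.two_dvd
  set T : Bool × ZMod n → Fin 2 :=
    (fun v => if v.2.val % 2 = 0 then 0 else 1) with hT
  have hv1 : (1 : ZMod n).val % 2 = 1 := by rw [aux_val_one hn]
  have hvm1 : (-1 : ZMod n).val % 2 = 1 := by
    rw [aux_val_neg_one hn]; omega
  have hv3 : (3 : ZMod n).val % 2 = 1 := by rw [aux_val_three hn]
  have hvm3 : (-3 : ZMod n).val % 2 = 1 := by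
    rw [aux_val_neg_three hn]; omega
  have h2 : (2 : ZMod n) ≠ 0 := by
    have := aux_cast_ne_zero hn (k := 2) (by omega) (by omega); simpa using this
  have h6 : (6 : ZMod n) ≠ 0 := by
    have := aux_cast_ne_zero hn (k := 6) (by omega) (by omega); simpa using this
  constructor
  · intro j
    fin_cases j
    · exact ⟨(false, 0), by simp [hT]⟩
    · exact ⟨(false, 1), by simp [hT, aux_val_one hn]⟩
  · rintro ⟨s, i⟩ j
    cases s
    · -- outer vertex
      have hAB : ((false, i + 1) : Bool × ZMod n) ≠ (false, i - 1) := by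
        intro h
        apply h2
        have := congrArg Prod.snd h
        simp only at this
        linear_combination this
      by_cases hc : i.val % 2 = 0
      · have hTv : T (false, i) = 0 := by simp [hT, hc]
        have hTA : T (false, i + 1) = 1 := by
          simp only [hT]; rw [aux_val_add hn hE i 1 hv1, if_neg (by omega)]
        have hTB : T (false, i - 1) = 1 := by
          simp only [hT, sub_eq_add_neg]
          rw [aux_val_add hn hE i (-1) hvm1, if_neg (by omega)]
        have hTC : T (true, i) = 0 := by simp [hT, hc]
        have key := ncard_cases (GP n 3) T (false, i) (false, i + 1) (false, i - 1)
          (true, i) (GP_adj_false hn i) hAB hTA hTB hTC (by decide)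
        rw [hTv]
        rcases (by decide : ∀ j : Fin 2, j = 0 ∨ j = 1) j with rfl | rfl
        · rw [key.2]; rfl
        · rw [key.1]; rfl
      · have hTv : T (false, i) = 1 := by simp [hT, hc]
        have hTA : T (false, i + 1) = 0 := by
          simp only [hT]; rw [aux_val_add hn hE i 1 hv1, if_pos (by omega)]
        have hTB : T (false, i - 1) = 0 := by
          simp only [hT, sub_eq_add_neg]
          rw [aux_val_add hn hE i (-1) hvm1, if_pos (by omega)]
        have hTC : T (true, i) = 1 := by simp [hT, hc]
        have key := ncard_cases (GP n 3) T (false, i) (false, i + 1) (false, i - 1)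
          (true, i) (GP_adj_false hn i) hAB hTA hTB hTC (by decide)
        rw [hTv]
        rcases (by decide : ∀ j : Fin 2, j = 0 ∨ j = 1) j with rfl | rfl
        · rw [key.1]; rfl
        · rw [key.2]; rfl
    · -- inner vertex
      have hAB : ((true, i + 3) : Bool × ZMod n) ≠ (true, i - 3) := by
        intro h
        apply h6
        have := congrArg Prod.snd h
        simp only at this
        linear_combination this
      by_cases hc : i.val % 2 = 0
      · have hTv : T (true, i) = 0 := by simp [hT, hc]
        have hTA : T (true, i + 3) = 1 := by
          simp only [hT]; rw [aux_val_add hn hE i 3 hv3, if_neg (by omega)]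
        have hTB : T (true, i - 3) = 1 := by
          simp only [hT, sub_eq_add_neg]
          rw [aux_val_add hn hE i (-3) hvm3, if_neg (by omega)]
        have hTC : T (false, i) = 0 := by simp [hT, hc]
        have key := ncard_cases (GP n 3) T (true, i) (true, i + 3) (true, i - 3)
          (false, i) (GP_adj_true hn i) hAB hTA hTB hTC (by decide)
        rw [hTv]
        rcases (by decide : ∀ j : Fin 2, j = 0 ∨ j = 1) j with rfl | rfl
        · rw [key.2]; rfl
        · rw [key.1]; rfl
      · have hTv : T (true, i) = 1 := by simp [hT, hc]
        have hTA : T (true, i + 3) = 0 := by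
          simp only [hT]; rw [aux_val_add hn hE i 3 hv3, if_pos (by omega)]
        have hTB : T (true, i - 3) = 0 := by
          simp only [hT, sub_eq_add_neg]
          rw [aux_val_add hn hE i (-3) hvm3, if_pos (by omega)]
        have hTC : T (false, i) = 1 := by simp [hT, hc]
        have key := ncard_cases (GP n 3) T (true, i) (true, i + 3) (true, i - 3)
          (false, i) (GP_adj_true hn i) hAB hTA hTB hTC (by decide)
        rw [hTv]
        rcases (by decide : ∀ j : Fin 2, j = 0 ∨ j = 1) j with rfl | rfl
        · rw [key.1]; rfl
        · rw [key.2]; rfl
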